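/- The pressure function satisfies p(t) = +∞ for every t < 0, and p(t) ≤ (1 + t) log 2 for every t ≥ 0, with p(0) = log 2. -/

import Mathlib

open Real Filter
open scoped ENNReal NNReal

noncomputable def psi (x : ℝ) : ℝ := Real.log (1 - Real.cos (2 * Real.pi * x))

noncomputable def psiSum (n : ℕ) (x : ℝ) : ℝ :=
  ∑ ℓ ∈ Finset.range n, psi (Int.fract ((2:ℝ) ^ ℓ * x))

/-- `A t n = ∑_{ω ∈ Σ^n} sup_{x ∈ ⟨ω⟩} exp(t ψ_n(x))`. -/
noncomputable def A (t : ℝ) (n : ℕ) : ENNReal :=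
  ∑ k ∈ Finset.range (2^n),
    ⨆ y ∈ Set.Icc ((k:ℝ) / 2^n) ((k+1 : ℝ) / 2^n), ENNReal.ofReal (Real.exp (t * psiSum n y))

lemma psi_fract (z : ℝ) : psi (Int.fract z) = Real.log (1 - Real.cos (2 * Real.pi * z)) := by
  unfold psi
  have h : 2 * Real.pi * Int.fract z = 2 * Real.pi * z - (⌊z⌋ : ℝ) * (2 * Real.pi) := by
    rw [Int.fract]; ring
  rw [h, Real.cos_sub_int_mul_two_pi]

lemma psi_le (x : ℝ) : psi x ≤ Real.log 2 := by
  unfold psi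
  rcases eq_or_lt_of_le (sub_nonneg.2 (Real.cos_le_one _)) with h | h
  · rw [← h, Real.log_zero]; positivity
  · exact Real.log_le_log h (by nlinarith [Real.neg_one_le_cos (2 * Real.pi * x)])

lemma psiSum_le (n : ℕ) (y : ℝ) : psiSum n y ≤ n * Real.log 2 := by
  unfold psiSum
  calc ∑ ℓ ∈ Finset.range n, psi (Int.fract ((2:ℝ) ^ ℓ * y))
      ≤ ∑ ℓ ∈ Finset.range n, Real.log 2 := Finset.sum_le_sum fun i _ => psi_le _
    _ = n * Real.log 2 := by simp [Finset.sum_const, mul_comm]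

lemma tendsto_psi0 : Tendsto (fun y : ℝ => Real.log (1 - Real.cos (2 * Real.pi * y)))
    (nhdsWithin 0 (Set.Ioi 0)) atBot := by
  apply Real.tendsto_log_nhdsGT_zero.comp
  apply tendsto_nhdsWithin_of_tendsto_nhds_of_eventually_within
  · have hc : Tendsto (fun y : ℝ => 1 - Real.cos (2 * Real.pi * y)) (nhds 0) (nhds 0) := by
      have hcont : Continuous fun y : ℝ => 1 - Real.cos (2 * Real.pi * y) := by continuity
      simpa using hcont.tendsto 0
    exact hc.mono_left nhdsWithin_le_nhds
  · filter_upwards [Ioo_mem_nhdsGT_of_mem ⟨le_refl (0:ℝ), one_pos⟩] with y hy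
    have h1 : Real.cos (2 * Real.pi * y) < 1 := by
      rcases lt_or_eq_of_le (Real.cos_le_one (2 * Real.pi * y)) with h | h
      · exact h
      · exfalso
        obtain ⟨n, hn⟩ := (Real.cos_eq_one_iff _).1 h
        have hpi := Real.pi_pos
        have h2 : (n:ℝ) * (2*Real.pi) = y * (2*Real.pi) := by linarith [hn]
        have : (n : ℝ) = y := mul_right_cancel₀ (ne_of_gt (by positivity)) h2
        rcases hy with ⟨hy1, hy2⟩
        rw [← this] at hy1 hy2
        have : (0:ℤ) < n := by exact_mod_cast hy1
        have : (n:ℤ) < 1 := by exact_mod_cast hy2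
        omega
    exact Set.mem_Ioi.2 (by linarith)

lemma tendsto_psiSum_atBot (n : ℕ) (hn : 1 ≤ n) :
    Tendsto (fun y : ℝ => psiSum n y) (nhdsWithin 0 (Set.Ioi 0)) atBot := by
  obtain ⟨m, rfl⟩ : ∃ m, n = m + 1 := ⟨n - 1, by omega⟩
  apply tendsto_atBot_mono (g := fun y => psiSum (m+1) y)
    (f := fun y => Real.log (1 - Real.cos (2 * Real.pi * y)) + m * Real.log 2) ?_
  · apply Filter.Tendsto.atBot_add tendsto_psi0 tendsto_const_nhds
  · intro y
    simp only [psiSum]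
    rw [Finset.sum_range_succ']
    have h0 : psi (Int.fract ((2:ℝ) ^ 0 * y)) = Real.log (1 - Real.cos (2 * Real.pi * y)) := by
      rw [pow_zero, one_mul, psi_fract]
    rw [h0]
    have : ∑ i ∈ Finset.range m, psi (Int.fract ((2:ℝ) ^ (i+1) * y)) ≤ m * Real.log 2 := by
      calc _ ≤ ∑ i ∈ Finset.range m, Real.log 2 := Finset.sum_le_sum fun i _ => psi_le _
        _ = m * Real.log 2 := by simp [mul_comm]
      
    linarith

lemma A_top (t : ℝ) (ht : t < 0) (n : ℕ) (hn : 1 ≤ n) : A t n = ⊤ := by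
  have hS : (⨆ y ∈ Set.Icc ((0:ℝ)) ((1:ℝ) / 2^n),
      ENNReal.ofReal (Real.exp (t * psiSum n y))) = ⊤ := by
    apply ENNReal.eq_top_of_forall_nnreal_le
    intro r
    set b : ℝ := Real.log ((r:ℝ) + 1) / t with hb
    have hev1 := (tendsto_psiSum_atBot n hn).eventually (eventually_le_atBot b)
    have hev2 : ∀ᶠ y in nhdsWithin 0 (Set.Ioi 0), y ∈ Set.Ioo (0:ℝ) (1/2^n) :=
      Ioo_mem_nhdsGT_of_mem ⟨le_refl _, by positivity⟩
    obtain ⟨y, hy1, hy2⟩ := (hev1.and hev2).exists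
    have hmem : y ∈ Set.Icc (0:ℝ) (1/2^n) := ⟨hy2.1.le, hy2.2.le⟩
    have hval : Real.log ((r:ℝ) + 1) ≤ t * psiSum n y := by
      have := mul_le_mul_of_nonpos_left hy1 ht.le
      rwa [hb, mul_div_cancel₀ _ (ne_of_lt ht)] at this
    have : (r : ℝ≥0∞) ≤ ENNReal.ofReal (Real.exp (t * psiSum n y)) := by
      rw [← ENNReal.ofReal_coe_nnreal]
      apply ENNReal.ofReal_le_ofReal
      calc (r:ℝ) ≤ (r:ℝ) + 1 := by linarith
        _ = Real.exp (Real.log ((r:ℝ) + 1)) := (Real.exp_log (by positivity)).symm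
        _ ≤ Real.exp (t * psiSum n y) := Real.exp_le_exp.2 hval
    exact this.trans (le_biSup (fun y => ENNReal.ofReal (Real.exp (t * psiSum n y))) hmem)
  apply top_unique
  have h0 : (0:ℕ) ∈ Finset.range (2^n) := Finset.mem_range.2 (Nat.pow_pos (by norm_num))
  have hle := Finset.single_le_sum
    (f := fun k : ℕ => ⨆ y ∈ Set.Icc ((k:ℝ) / 2^n) ((k+1 : ℝ) / 2^n),
      ENNReal.ofReal (Real.exp (t * psiSum n y))) (fun i _ => zero_le) h0
  have he : (⨆ y ∈ Set.Icc (((0:ℕ):ℝ) / 2^n) ((((0:ℕ):ℝ)+1 : ℝ) / 2^n),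
      ENNReal.ofReal (Real.exp (t * psiSum n y))) = ⊤ := by
    rw [← hS]; norm_num
  unfold A
  exact le_trans (le_of_eq he.symm) hle

lemma exp_two_pow (n : ℕ) : (2:ℝ)^n = Real.exp ((n:ℝ) * Real.log 2) := by
  rw [Real.exp_nat_mul, Real.exp_log two_pos]

lemma log_A_le (t : ℝ) (ht : 0 ≤ t) (n : ℕ) :
    ENNReal.log (A t n) ≤ (((1+t) * Real.log 2 * n : ℝ) : EReal) := by
  have hA : A t n ≤ ENNReal.ofReal (Real.exp ((1+t) * Real.log 2 * n)) := by
    have hterm : ∀ k ∈ Finset.range (2^n),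
        (⨆ y ∈ Set.Icc ((k:ℝ)/2^n) ((k+1:ℝ)/2^n), ENNReal.ofReal (Real.exp (t * psiSum n y)))
          ≤ ENNReal.ofReal (Real.exp (t * (n * Real.log 2))) := fun k _ =>
      iSup₂_le fun y _ => ENNReal.ofReal_le_ofReal
        (Real.exp_le_exp.2 (mul_le_mul_of_nonneg_left (psiSum_le n y) ht))
    calc A t n ≤ ∑ _k ∈ Finset.range (2^n), ENNReal.ofReal (Real.exp (t * (n * Real.log 2))) :=
          Finset.sum_le_sum hterm
      _ = (2^n : ℕ) * ENNReal.ofReal (Real.exp (t * (n * Real.log 2))) := by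
          rw [Finset.sum_const, Finset.card_range, nsmul_eq_mul]
      _ = ENNReal.ofReal ((2:ℝ)^n) * ENNReal.ofReal (Real.exp (t * (n * Real.log 2))) := by
          congr 1
          rw [ENNReal.ofReal_pow (by norm_num)]
          norm_num
      _ = ENNReal.ofReal ((2:ℝ)^n * Real.exp (t * (n * Real.log 2))) :=
          (ENNReal.ofReal_mul (by positivity)).symm
      _ = ENNReal.ofReal (Real.exp ((1+t) * Real.log 2 * n)) := by
          rw [exp_two_pow, ← Real.exp_add]
          congr 1
          ring
  calc ENNReal.log (A t n) ≤ ENNReal.log (ENNReal.ofReal (Real.exp ((1+t) * Real.log 2 * n))) :=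
        ENNReal.log_monotone hA
    _ = (((1+t) * Real.log 2 * n : ℝ) : EReal) := by
        rw [ENNReal.log_ofReal_of_pos (Real.exp_pos _), Real.log_exp]

lemma A_zero (n : ℕ) : A 0 n = ENNReal.ofReal (Real.exp (Real.log 2 * n)) := by
  unfold A
  have hterm : ∀ k ∈ Finset.range (2^n),
      (⨆ y ∈ Set.Icc ((k:ℝ)/2^n) ((k+1:ℝ)/2^n), ENNReal.ofReal (Real.exp ((0:ℝ) * psiSum n y)))
        = 1 := by
    intro k _
    simp only [zero_mul, Real.exp_zero, ENNReal.ofReal_one]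
    apply biSup_const
    apply Set.nonempty_Icc.2
    gcongr
    linarith
  rw [Finset.sum_congr rfl hterm, Finset.sum_const, Finset.card_range, nsmul_eq_mul, mul_one]
  rw [mul_comm (Real.log 2), ← exp_two_pow, ENNReal.ofReal_pow (by norm_num)]
  norm_num

lemma ediv_nat (c : ℝ) (n : ℕ) (hn : 1 ≤ n) :
    ((c * n : ℝ) : EReal) / (n : EReal) = (c : EReal) := by
  have hn' : (n:ℝ) ≠ 0 := Nat.cast_ne_zero.2 (by omega)
  rw [← EReal.coe_coe_eq_natCast, ← EReal.coe_div, mul_div_assoc, div_self hn', mul_one]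

theorem pressure_basic_values (p : ℝ → EReal)
    (hp : ∀ t : ℝ, Filter.Tendsto (fun n : ℕ => ENNReal.log (A t n) / (n : EReal))
      Filter.atTop (nhds (p t))) :
    (∀ t : ℝ, t < 0 → p t = ⊤) ∧
    (∀ t : ℝ, 0 ≤ t → p t ≤ (((1 + t) * Real.log 2 : ℝ) : EReal)) ∧
    p 0 = ((Real.log 2 : ℝ) : EReal) := by
  refine ⟨?_, ?_, ?_⟩
  · intro t ht
    have hev : ∀ᶠ n in atTop, ENNReal.log (A t n) / (n : EReal) = (⊤ : EReal) := by
      filter_upwards [eventually_ge_atTop 1] with n hn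
      rw [A_top t ht n hn, ENNReal.log_top]
      apply EReal.top_div_of_pos_ne_top
      · rw [← EReal.coe_coe_eq_natCast]
        exact_mod_cast (by positivity : (0:ℝ) < (n:ℝ))
      · rw [← EReal.coe_coe_eq_natCast]
        exact EReal.coe_ne_top _
    exact tendsto_nhds_unique (hp t)
      ((tendsto_const_nhds (α := ℕ) (f := atTop)).congr' (hev.mono fun n h => h.symm))
  · intro t ht
    refine le_of_tendsto (hp t) ?_
    filter_upwards [eventually_ge_atTop 1] with n hn
    calc ENNReal.log (A t n) / (n:EReal)
        ≤ (((1+t) * Real.log 2 * n : ℝ):EReal) / (n:EReal) := by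
          apply EReal.div_le_div_right_of_nonneg _ (log_A_le t ht n)
          rw [← EReal.coe_coe_eq_natCast]
          exact_mod_cast (by positivity : (0:ℝ) ≤ (n:ℝ))
      _ = (((1+t) * Real.log 2 : ℝ):EReal) := ediv_nat _ n hn
  · have hev : ∀ᶠ n in atTop, ENNReal.log (A 0 n) / (n : EReal) = ((Real.log 2 : ℝ):EReal) := by
      filter_upwards [eventually_ge_atTop 1] with n hn
      rw [A_zero n, ENNReal.log_ofReal_of_pos (Real.exp_pos _), Real.log_exp, ediv_nat _ n hn]
    exact tendsto_nhds_unique (hp 0)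
      ((tendsto_const_nhds (α := ℕ) (f := atTop)).congr' (hev.mono fun n h => h.symm))
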